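/- Suppose f is strictly decreasing and continuous with f(x) → +∞ as x → 0+ and f(x) → -∞ as x → ∞ (radially unbounded potential), and g is strictly increasing and continuous. Then every solution of q̇ = p, ṗ = f(e^q x*) - g(p + μ₀) starting at any initial condition is bounded: it remains in the sublevel set {V ≤ V(q(0), p(0))} of the energy V for all t ≥ 0. -/

import Mathlib

theorem stmt_4 (μ₀ : ℝ) (xs : ℝ) (hxs : 0 < xs) (f g : ℝ → ℝ)
    (hf : ContinuousOn f (Set.Ioi 0)) (hfanti : StrictAntiOn f (Set.Ioi 0))
    (hf0 : Filter.Tendsto f (nhdsWithin 0 (Set.Ioi 0)) Filter.atTop)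
    (hfinf : Filter.Tendsto f Filter.atTop Filter.atBot)
    (hg : Continuous g) (hgmono : StrictMono g)
    (hcomp : f xs = g μ₀)
    (V : ℝ → ℝ → ℝ)
    (hV : ∀ a b, V a b = b ^ 2 / 2 + ∫ s in (0:ℝ)..a, (g μ₀ - f (Real.exp s * xs)))
    (q p : ℝ → ℝ)
    (hq : ∀ t ≥ (0:ℝ), HasDerivAt q (p t) t)
    (hp : ∀ t ≥ (0:ℝ), HasDerivAt p (f (Real.exp (q t) * xs) - g (p t + μ₀)) t) :
    ∀ t ≥ (0:ℝ), V (q t) (p t) ≤ V (q 0) (p 0) := by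
  set φ : ℝ → ℝ := fun s => g μ₀ - f (Real.exp s * xs) with hφdef
  have hφc : Continuous φ := by
    apply continuous_const.sub
    apply hf.comp_continuous (by continuity)
    intro s
    exact mul_pos (Real.exp_pos s) hxs
  set F : ℝ → ℝ := fun a => ∫ s in (0:ℝ)..a, φ s with hFdef
  have hF : ∀ a, HasDerivAt F (φ a) a := fun a =>
    intervalIntegral.integral_hasDerivAt_right (hφc.intervalIntegrable 0 a)
      (hφc.stronglyMeasurableAtFilter _ _) hφc.continuousAt
  set h : ℝ → ℝ := fun t => (p t) ^ 2 / 2 + F (q t) with hhdef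
  have hh : ∀ t ≥ (0:ℝ), HasDerivAt h (p t * (g μ₀ - g (p t + μ₀))) t := by
    intro t ht
    have h1 : HasDerivAt (fun t => (p t) ^ 2 / 2)
        (p t * (f (Real.exp (q t) * xs) - g (p t + μ₀))) t := by
      have := (((hp t ht).pow 2).div_const 2)
      refine this.congr_deriv ?_
      norm_num
      ring
    have h2 : HasDerivAt (fun t => F (q t)) (φ (q t) * p t) t :=
      (hF (q t)).comp t (hq t ht)
    have := h1.add h2
    refine this.congr_deriv ?_
    simp only [hφdef]
    ring
  have hcont : ContinuousOn h (Set.Ici 0) := fun t ht =>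
    ((hh t ht).continuousAt).continuousWithinAt
  have hanti : AntitoneOn h (Set.Ici 0) := by
    apply antitoneOn_of_deriv_nonpos (convex_Ici 0) hcont
    · intro t ht
      rw [interior_Ici] at ht
      exact ((hh t (le_of_lt ht)).differentiableAt).differentiableWithinAt
    · intro t ht
      rw [interior_Ici] at ht
      rw [(hh t (le_of_lt ht)).deriv]
      rcases le_or_gt 0 (p t) with hpt | hpt
      · apply mul_nonpos_of_nonneg_of_nonpos hpt
        simp only [sub_nonpos]
        exact hgmono.le_iff_le.mpr (by linarith)
      · apply mul_nonpos_of_nonpos_of_nonneg (le_of_lt hpt)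
        simp only [sub_nonneg]
        exact hgmono.le_iff_le.mpr (by linarith)
  intro t ht
  have := hanti Set.self_mem_Ici ht ht
  simpa [hhdef, hFdef, hV] using this
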